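/- Under the Bernoulli product model with $\sum_{j\geq 1} p_j \leq W$, the bias of the Good-Turing estimator satisfies $0 \leq \mathbb{E}[\hat{M}_n - M_n] \leq W/n$, where $\hat{M}_n = K_{n,1}/n$ and $M_n$ is the missing mass. -/

import Mathlib

open MeasureTheory ProbabilityTheory Real
open scoped ENNReal NNReal

lemma tsum_eq_toReal_ofReal {g : ℕ → ℝ} (hg : ∀ i, 0 ≤ g i) :
    ∑' i, g i = (∑' i, ENNReal.ofReal (g i)).toReal := by
  by_cases h : Summable g
  · rw [← ENNReal.ofReal_tsum_of_nonneg hg h, ENNReal.toReal_ofReal (tsum_nonneg hg)]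
  · rw [tsum_eq_zero_of_not_summable h]
    have htop : ∑' i, ENNReal.ofReal (g i) = ⊤ := by
      by_contra h'
      exact h (by simpa [ENNReal.toReal_ofReal, hg _] using ENNReal.summable_toReal h')
    simp [htop]

lemma integrable_tsum_nonneg {Ω : Type*} [MeasurableSpace Ω] {μ : Measure Ω}
    {f : ℕ → Ω → ℝ} (hm : ∀ i, Measurable (f i)) (hnn : ∀ i a, 0 ≤ f i a)
    (hfin : ∑' i, ∫⁻ a, ENNReal.ofReal (f i a) ∂μ ≠ ⊤) :
    Integrable (fun a => ∑' i, f i a) μ := by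
  have heq : ∀ a, ∑' i, f i a = (∑' i, ENNReal.ofReal (f i a)).toReal := fun a =>
    tsum_eq_toReal_ofReal (fun i => hnn i a)
  have hmeas' : Measurable fun a => ∑' i, ENNReal.ofReal (f i a) :=
    Measurable.ennreal_tsum fun i => (hm i).ennreal_ofReal
  constructor
  · have : Measurable fun a => ∑' i, f i a := by
      simp_rw [heq]; exact hmeas'.ennreal_toReal
    exact this.aestronglyMeasurable
  · rw [hasFiniteIntegral_iff_norm]
    calc ∫⁻ a, ENNReal.ofReal ‖∑' i, f i a‖ ∂μ
        ≤ ∫⁻ a, ∑' i, ENNReal.ofReal (f i a) ∂μ := by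
          refine lintegral_mono fun a => ?_
          rw [heq a, Real.norm_eq_abs, abs_of_nonneg ENNReal.toReal_nonneg]
          exact ENNReal.ofReal_toReal_le
      _ = ∑' i, ∫⁻ a, ENNReal.ofReal (f i a) ∂μ :=
          lintegral_tsum fun i => ((hm i).ennreal_ofReal).aemeasurable
      _ < ⊤ := hfin.lt_top

lemma key_ineq {x : ℝ} (hx0 : 0 < x) (hx1 : x < 1) {n : ℕ} (hn : 1 ≤ n) :
    (n : ℝ) * (x * (1 - x) ^ (n - 1)) ≤ 1 := by
  set y := 1 - x with hy
  have hy0 : 0 ≤ y := by simp [hy]; linarith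
  have hy1 : y ≤ 1 := by simp [hy]; linarith
  have h1 : (n : ℝ) * y ^ (n - 1) ≤ ∑ k ∈ Finset.range n, y ^ k := by
    have hle : ∀ k ∈ Finset.range n, y ^ (n - 1) ≤ y ^ k := fun k hk =>
      pow_le_pow_of_le_one hy0 hy1 (by have := Finset.mem_range.1 hk; omega)
    calc (n : ℝ) * y ^ (n - 1) = ∑ _k ∈ Finset.range n, y ^ (n - 1) := by
          rw [Finset.sum_const, Finset.card_range, nsmul_eq_mul]
      _ ≤ ∑ k ∈ Finset.range n, y ^ k := Finset.sum_le_sum hle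
  have h2 : (∑ k ∈ Finset.range n, y ^ k) * (y - 1) = y ^ n - 1 := geom_sum_mul y n
  have h3 : (0 : ℝ) ≤ y ^ n := pow_nonneg hy0 n
  have h4 : x * ((n : ℝ) * y ^ (n - 1)) ≤ x * ∑ k ∈ Finset.range n, y ^ k :=
    mul_le_mul_of_nonneg_left h1 hx0.le
  have hyx : y - 1 = -x := by simp [hy]
  nlinarith [h4, h2, h3]

theorem stmt
    {Ω : Type*} [MeasurableSpace Ω] (μ : Measure Ω) [IsProbabilityMeasure μ]
    (p : ℕ → ℝ) (hp : ∀ j, p j ∈ Set.Ioo (0 : ℝ) 1) (hsum : Summable p)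
    (n : ℕ) (X : ℕ → Ω → ℕ)
    (hmeas : ∀ j, Measurable (X j))
    (hindep : iIndepFun X μ)
    (hbin : ∀ j k, μ {ω | X j ω = k} =
      ENNReal.ofReal ((n.choose k : ℝ) * p j ^ k * (1 - p j) ^ (n - k)))
    (W : ℝ) (hW : ∑' j, p j ≤ W) (hn : 1 ≤ n) :
    0 ≤ (∫ ω, ((∑' j, if X j ω = 1 then (1 : ℝ) else 0) / n
        - ∑' j, if X j ω = 0 then p j else 0) ∂μ) ∧
    (∫ ω, ((∑' j, if X j ω = 1 then (1 : ℝ) else 0) / n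
        - ∑' j, if X j ω = 0 then p j else 0) ∂μ) ≤ W / n := by
  have hn' : (0 : ℝ) < n := by exact_mod_cast hn
  set f : ℕ → Ω → ℝ := fun j ω => if X j ω = 1 then (1 : ℝ) else 0 with hf
  set g : ℕ → Ω → ℝ := fun j ω => if X j ω = 0 then p j else 0 with hg
  -- indicator representations
  have hsmeas : ∀ j, MeasurableSet {ω | X j ω = 1} := fun j =>
    (hmeas j) (measurableSet_singleton 1)
  have htmeas : ∀ j, MeasurableSet {ω | X j ω = 0} := fun j =>
    (hmeas j) (measurableSet_singleton 0)
  have hfind : ∀ j, f j = ({ω | X j ω = 1}).indicator (fun _ => (1 : ℝ)) := by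
    intro j; funext ω; simp [hf, Set.indicator_apply, Set.mem_setOf_eq]
  have hgind : ∀ j, g j = ({ω | X j ω = 0}).indicator (fun _ => p j) := by
    intro j; funext ω; simp [hg, Set.indicator_apply, Set.mem_setOf_eq]
  have hfm : ∀ j, Measurable (f j) := by
    intro j; rw [hfind j]; exact (measurable_const.indicator (hsmeas j))
  have hgm : ∀ j, Measurable (g j) := by
    intro j; rw [hgind j]; exact (measurable_const.indicator (htmeas j))
  have hfnn : ∀ j ω, 0 ≤ f j ω := by intro j ω; simp only [hf]; split <;> norm_num
  have hgnn : ∀ j ω, 0 ≤ g j ω := by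
    intro j ω; simp only [hg]; split
    · exact (hp j).1.le
    · exact le_refl 0
  -- measures of the sets
  have hμs : ∀ j, μ {ω | X j ω = 1} = ENNReal.ofReal ((n : ℝ) * p j * (1 - p j) ^ (n - 1)) := by
    intro j
    rw [hbin j 1]
    norm_num
  have hμt : ∀ j, μ {ω | X j ω = 0} = ENNReal.ofReal ((1 - p j) ^ n) := by
    intro j
    rw [hbin j 0]
    norm_num
  -- lintegrals
  have hlf : ∀ j, ∫⁻ a, ENNReal.ofReal (f j a) ∂μ = μ {ω | X j ω = 1} := by
    intro j
    have : (fun a => ENNReal.ofReal (f j a))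
        = ({ω | X j ω = 1}).indicator (fun _ => (1 : ℝ≥0∞)) := by
      funext a; simp [hf, Set.indicator_apply, Set.mem_setOf_eq]; split <;> simp
    rw [this, lintegral_indicator_const (hsmeas j), one_mul]
  have hlg : ∀ j, ∫⁻ a, ENNReal.ofReal (g j a) ∂μ
      = ENNReal.ofReal (p j) * μ {ω | X j ω = 0} := by
    intro j
    have : (fun a => ENNReal.ofReal (g j a))
        = ({ω | X j ω = 0}).indicator (fun _ => ENNReal.ofReal (p j)) := by
      funext a; simp [hg, Set.indicator_apply, Set.mem_setOf_eq]; split <;> simp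
    rw [this, lintegral_indicator_const (htmeas j)]
  -- pj bounds
  have hp0 : ∀ j, 0 < p j := fun j => (hp j).1
  have hp1 : ∀ j, p j < 1 := fun j => (hp j).2
  have h1p0 : ∀ j, (0 : ℝ) ≤ 1 - p j := fun j => by linarith [hp1 j]
  have h1p1 : ∀ j, 1 - p j ≤ 1 := fun j => by linarith [hp0 j]
  have hpow1 : ∀ j (m : ℕ), (1 - p j) ^ m ≤ 1 := fun j m =>
    pow_le_one₀ (h1p0 j) (h1p1 j)
  have hpownn : ∀ j (m : ℕ), (0 : ℝ) ≤ (1 - p j) ^ m := fun j m =>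
    pow_nonneg (h1p0 j) m
  -- finiteness of lintegral sums
  have hsum' : Summable (fun j => (n : ℝ) * p j) := hsum.mul_left _
  have hfinf : ∑' j, ∫⁻ a, ENNReal.ofReal (f j a) ∂μ ≠ ⊤ := by
    have hle : ∑' j, ∫⁻ a, ENNReal.ofReal (f j a) ∂μ
        ≤ ∑' j, ENNReal.ofReal ((n : ℝ) * p j) := by
      refine ENNReal.tsum_le_tsum fun j => ?_
      rw [hlf j, hμs j]
      refine ENNReal.ofReal_le_ofReal ?_
      calc (n : ℝ) * p j * (1 - p j) ^ (n - 1) ≤ (n : ℝ) * p j * 1 := by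
            exact mul_le_mul_of_nonneg_left (hpow1 j _)
              (mul_nonneg hn'.le (hp0 j).le)
        _ = (n : ℝ) * p j := mul_one _
    refine ne_top_of_le_ne_top ?_ hle
    rw [← ENNReal.ofReal_tsum_of_nonneg (fun j => mul_nonneg hn'.le (hp0 j).le) hsum']
    exact ENNReal.ofReal_ne_top
  have hfing : ∑' j, ∫⁻ a, ENNReal.ofReal (g j a) ∂μ ≠ ⊤ := by
    have hle : ∑' j, ∫⁻ a, ENNReal.ofReal (g j a) ∂μ
        ≤ ∑' j, ENNReal.ofReal (p j) := by
      refine ENNReal.tsum_le_tsum fun j => ?_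
      rw [hlg j]
      calc ENNReal.ofReal (p j) * μ {ω | X j ω = 0} ≤ ENNReal.ofReal (p j) * 1 :=
            mul_le_mul_right prob_le_one _
        _ = ENNReal.ofReal (p j) := mul_one _
    refine ne_top_of_le_ne_top ?_ hle
    rw [← ENNReal.ofReal_tsum_of_nonneg (fun j => (hp0 j).le) hsum]
    exact ENNReal.ofReal_ne_top
  -- integrability
  have hintF : Integrable (fun ω => ∑' j, f j ω) μ :=
    integrable_tsum_nonneg hfm hfnn hfinf
  have hintG : Integrable (fun ω => ∑' j, g j ω) μ :=
    integrable_tsum_nonneg hgm hgnn hfing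
  -- individual integrals
  have hif : ∀ j, ∫ ω, f j ω ∂μ = (n : ℝ) * p j * (1 - p j) ^ (n - 1) := by
    intro j
    rw [hfind j, integral_indicator_const (1 : ℝ) (hsmeas j), smul_eq_mul, mul_one, measureReal_def,
      hμs j, ENNReal.toReal_ofReal (mul_nonneg (mul_nonneg hn'.le (hp0 j).le) (hpownn j _))]
  have hig : ∀ j, ∫ ω, g j ω ∂μ = p j * (1 - p j) ^ n := by
    intro j
    rw [hgind j, integral_indicator_const (p j) (htmeas j), smul_eq_mul, measureReal_def,
      hμt j, ENNReal.toReal_ofReal (hpownn j n), mul_comm]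
  -- interchange integral and tsum
  have hennnorm : ∀ (h : ℕ → Ω → ℝ), (∀ i a, 0 ≤ h i a) →
      ∀ i, (fun a => (‖h i a‖ₑ)) = fun a => ENNReal.ofReal (h i a) := by
    intro h hnn i; funext a; exact Real.enorm_eq_ofReal (hnn i a)
  have hIF : ∫ ω, (∑' j, f j ω) ∂μ = ∑' j, ∫ ω, f j ω ∂μ := by
    refine integral_tsum (fun i => (hfm i).aestronglyMeasurable) ?_
    simp_rw [hennnorm f hfnn]
    exact hfinf
  have hIG : ∫ ω, (∑' j, g j ω) ∂μ = ∑' j, ∫ ω, g j ω ∂μ := by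
    refine integral_tsum (fun i => (hgm i).aestronglyMeasurable) ?_
    simp_rw [hennnorm g hgnn]
    exact hfing
  -- the main integral
  have hsplit : ∫ ω, ((∑' j, f j ω) / n - ∑' j, g j ω) ∂μ
      = (∑' j, ∫ ω, f j ω ∂μ) / n - ∑' j, ∫ ω, g j ω ∂μ := by
    rw [integral_sub (hintF.div_const _) hintG, integral_div, hIF, hIG]
  -- summabilities of the value series
  have hsumf : Summable (fun j => (n : ℝ) * p j * (1 - p j) ^ (n - 1)) := by
    refine hsum'.of_nonneg_of_le
      (fun j => mul_nonneg (mul_nonneg hn'.le (hp0 j).le) (hpownn j _)) (fun j => ?_)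
    calc (n : ℝ) * p j * (1 - p j) ^ (n - 1) ≤ (n : ℝ) * p j * 1 :=
          mul_le_mul_of_nonneg_left (hpow1 j _) (mul_nonneg hn'.le (hp0 j).le)
      _ = (n : ℝ) * p j := mul_one _
  have hsumg : Summable (fun j => p j * (1 - p j) ^ n) := by
    refine hsum.of_nonneg_of_le (fun j => mul_nonneg (hp0 j).le (hpownn j _)) (fun j => ?_)
    calc p j * (1 - p j) ^ n ≤ p j * 1 :=
          mul_le_mul_of_nonneg_left (hpow1 j _) (hp0 j).le
      _ = p j := mul_one _
  -- value of the expectation as a single tsum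
  have hval : (∑' j, ∫ ω, f j ω ∂μ) / n - ∑' j, ∫ ω, g j ω ∂μ
      = ∑' j, (p j ^ 2 * (1 - p j) ^ (n - 1)) := by
    simp_rw [hif, hig]
    rw [← tsum_div_const]
    rw [← Summable.tsum_sub (by simpa using hsumf.div_const (n : ℝ)) hsumg]
    congr 1
    funext j
    have hnsub : n - 1 + 1 = n := Nat.succ_pred_eq_of_pos hn
    have : (1 - p j) ^ n = (1 - p j) ^ (n - 1) * (1 - p j) := by
      rw [← pow_succ, hnsub]
    field_simp
    rw [this]
    ring
  rw [hsplit, hval]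
  constructor
  · exact tsum_nonneg fun j => mul_nonneg (sq_nonneg _) (hpownn j _)
  · have hterm : ∀ j, p j ^ 2 * (1 - p j) ^ (n - 1) ≤ p j / n := by
      intro j
      have hk := key_ineq (hp0 j) (hp1 j) hn
      rw [le_div_iff₀ hn']
      nlinarith [mul_le_mul_of_nonneg_left hk (hp0 j).le]
    have hsumub : Summable (fun j => p j / (n : ℝ)) := hsum.div_const _
    have hsumlhs : Summable (fun j => p j ^ 2 * (1 - p j) ^ (n - 1)) := by
      refine hsumub.of_nonneg_of_le (fun j => mul_nonneg (sq_nonneg _) (hpownn j _)) hterm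
    calc ∑' j, p j ^ 2 * (1 - p j) ^ (n - 1) ≤ ∑' j, p j / n :=
          Summable.tsum_le_tsum hterm hsumlhs hsumub
      _ = (∑' j, p j) / n := tsum_div_const
      _ ≤ W / n := by gcongr
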